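/- Let α^{c,c}, α^{c,a}, α^{a,c}, α^{a,a} > 0 and β^{c,c}, β^{c,a}, β^{a,c}, β^{a,a} > 0, and let 0 = A_0^c ≤ ⋯ ≤ A_{n_c}^c ≤ t and 0 ≤ A_1^a ≤ ⋯ ≤ A_{n_a}^a ≤ t be customer and agent message times. Then the improper integral ∫_t^∞ (λ_s^c + λ_s^a) ds converges and equals Σ_{i=0}^{n_c} (α^{c,c}/β^{c,c}) e^{−β^{c,c}(t−A_i^c)} + Σ_{j=1}^{n_a} (α^{c,a}/β^{c,a}) e^{−β^{c,a}(t−A_j^a)} + Σ_{i=0}^{n_c} (α^{a,c}/β^{a,c}) e^{−β^{a,c}(t−A_i^c)} + Σ_{j=1}^{n_a} (α^{a,a}/β^{a,a}) e^{−β^{a,a}(t−A_j^a)}. Consequently the probability of no more messages at all after time t in the BHP conversation model equals exp of minus this sum (Proposition 2, BHP case). -/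

import Mathlib

open MeasureTheory Filter
open MeasureTheory Filter Set Real Topology

lemma aux_int (a b A t : ℝ) (hb : 0 < b) :
    IntegrableOn (fun s => a * Real.exp (-b * (s - A))) (Set.Ioi t) ∧
    (∫ s in Set.Ioi t, a * Real.exp (-b * (s - A))) = a / b * Real.exp (-b * (t - A)) := by
  have hfun : (fun s : ℝ => a * Real.exp (-b * (s - A)))
      = fun s => (a * Real.exp (b * A)) * Real.exp (-b * s) := by
    funext s; rw [mul_assoc, ← Real.exp_add]; ring_nf
  constructor
  · rw [hfun]
    exact (exp_neg_integrableOn_Ioi t hb).const_mul _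
  · rw [hfun, MeasureTheory.integral_const_mul]
    have htend : Tendsto (fun s : ℝ => -Real.exp (-b * s) / b) atTop (𝓝 0) := by
      have h1 : Tendsto (fun s : ℝ => Real.exp (-(b * s))) atTop (𝓝 0) :=
        Real.tendsto_exp_neg_atTop_nhds_zero.comp (tendsto_id.const_mul_atTop hb)
      have := (h1.neg.div_const b)
      simpa [neg_mul] using this
    have h : (∫ s in Set.Ioi t, Real.exp (-b * s)) = Real.exp (-b * t) / b := by
      have := integral_Ioi_of_hasDerivAt_of_tendsto'
        (f := fun s => -Real.exp (-b * s) / b) (f' := fun s => Real.exp (-b * s)) (a := t)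
        (fun x _ => ?_) (exp_neg_integrableOn_Ioi t hb) htend
      · rw [this]; ring
      · have h1 := ((Real.hasDerivAt_exp (-b * x)).comp x
          (((hasDerivAt_id x).const_mul (-b))))
        have h2 := (h1.neg.div_const b)
        convert h2 using 1
        · rfl
        · rfl
        · rw [eq_div_iff hb.ne']; ring
    rw [h, show -b * (t - A) = -b * t + b * A by ring, Real.exp_add]
    ring


theorem bhp_no_more_messages
    (acc aca aac aaa bcc bca bac baa : ℝ)
    (hacc : 0 < acc) (haca : 0 < aca) (haac : 0 < aac) (haaa : 0 < aaa)
    (hbcc : 0 < bcc) (hbca : 0 < bca) (hbac : 0 < bac) (hbaa : 0 < baa)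
    (nc na : ℕ) (Ac Aa : ℕ → ℝ) (t : ℝ)
    (hAc0 : Ac 0 = 0)
    (hAcmono : ∀ i < nc, Ac i ≤ Ac (i + 1))
    (hAct : Ac nc ≤ t)
    (hAa1 : 1 ≤ na → 0 ≤ Aa 1)
    (hAamono : ∀ j, 1 ≤ j → j < na → Aa j ≤ Aa (j + 1))
    (hAat : 1 ≤ na → Aa na ≤ t) :
    IntegrableOn (fun s =>
        ((∑ i ∈ Finset.range (nc + 1), acc * Real.exp (-bcc * (s - Ac i)))
          + (∑ j ∈ Finset.Icc 1 na, aca * Real.exp (-bca * (s - Aa j))))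
        + ((∑ i ∈ Finset.range (nc + 1), aac * Real.exp (-bac * (s - Ac i)))
          + (∑ j ∈ Finset.Icc 1 na, aaa * Real.exp (-baa * (s - Aa j))))) (Set.Ioi t)
    ∧ (∫ s in Set.Ioi t,
        ((∑ i ∈ Finset.range (nc + 1), acc * Real.exp (-bcc * (s - Ac i)))
          + (∑ j ∈ Finset.Icc 1 na, aca * Real.exp (-bca * (s - Aa j))))
        + ((∑ i ∈ Finset.range (nc + 1), aac * Real.exp (-bac * (s - Ac i)))
          + (∑ j ∈ Finset.Icc 1 na, aaa * Real.exp (-baa * (s - Aa j)))))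
      = ((∑ i ∈ Finset.range (nc + 1), acc / bcc * Real.exp (-bcc * (t - Ac i)))
        + (∑ j ∈ Finset.Icc 1 na, aca / bca * Real.exp (-bca * (t - Aa j)))
        + (∑ i ∈ Finset.range (nc + 1), aac / bac * Real.exp (-bac * (t - Ac i)))
        + (∑ j ∈ Finset.Icc 1 na, aaa / baa * Real.exp (-baa * (t - Aa j))))
    ∧ Real.exp (-(∫ s in Set.Ioi t,
        ((∑ i ∈ Finset.range (nc + 1), acc * Real.exp (-bcc * (s - Ac i)))
          + (∑ j ∈ Finset.Icc 1 na, aca * Real.exp (-bca * (s - Aa j))))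
        + ((∑ i ∈ Finset.range (nc + 1), aac * Real.exp (-bac * (s - Ac i)))
          + (∑ j ∈ Finset.Icc 1 na, aaa * Real.exp (-baa * (s - Aa j))))))
      = Real.exp (-((∑ i ∈ Finset.range (nc + 1), acc / bcc * Real.exp (-bcc * (t - Ac i)))
        + (∑ j ∈ Finset.Icc 1 na, aca / bca * Real.exp (-bca * (t - Aa j)))
        + (∑ i ∈ Finset.range (nc + 1), aac / bac * Real.exp (-bac * (t - Ac i)))
        + (∑ j ∈ Finset.Icc 1 na, aaa / baa * Real.exp (-baa * (t - Aa j))))) := by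

  have key : ∀ (S : Finset ℕ) (a b : ℝ) (A : ℕ → ℝ), 0 < b →
      IntegrableOn (fun s => ∑ i ∈ S, a * Real.exp (-b * (s - A i))) (Set.Ioi t) ∧
      (∫ s in Set.Ioi t, ∑ i ∈ S, a * Real.exp (-b * (s - A i)))
        = ∑ i ∈ S, a / b * Real.exp (-b * (t - A i)) := by
    intro S a b A hb
    constructor
    · exact MeasureTheory.integrable_finset_sum S (fun i _ => (aux_int a b (A i) t hb).1)
    · rw [MeasureTheory.integral_finset_sum S (fun i _ => (aux_int a b (A i) t hb).1)]
      exact Finset.sum_congr rfl (fun i _ => (aux_int a b (A i) t hb).2)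
  obtain ⟨i1, e1⟩ := key (Finset.range (nc+1)) acc bcc Ac hbcc
  obtain ⟨i2, e2⟩ := key (Finset.Icc 1 na) aca bca Aa hbca
  obtain ⟨i3, e3⟩ := key (Finset.range (nc+1)) aac bac Ac hbac
  obtain ⟨i4, e4⟩ := key (Finset.Icc 1 na) aaa baa Aa hbaa
  have hint : IntegrableOn (fun s =>
        ((∑ i ∈ Finset.range (nc + 1), acc * Real.exp (-bcc * (s - Ac i)))
          + (∑ j ∈ Finset.Icc 1 na, aca * Real.exp (-bca * (s - Aa j))))
        + ((∑ i ∈ Finset.range (nc + 1), aac * Real.exp (-bac * (s - Ac i)))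
          + (∑ j ∈ Finset.Icc 1 na, aaa * Real.exp (-baa * (s - Aa j))))) (Set.Ioi t) :=
    (i1.add i2).add (i3.add i4)
  have heq : (∫ s in Set.Ioi t,
        ((∑ i ∈ Finset.range (nc + 1), acc * Real.exp (-bcc * (s - Ac i)))
          + (∑ j ∈ Finset.Icc 1 na, aca * Real.exp (-bca * (s - Aa j))))
        + ((∑ i ∈ Finset.range (nc + 1), aac * Real.exp (-bac * (s - Ac i)))
          + (∑ j ∈ Finset.Icc 1 na, aaa * Real.exp (-baa * (s - Aa j)))))
      = ((∑ i ∈ Finset.range (nc + 1), acc / bcc * Real.exp (-bcc * (t - Ac i)))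
        + (∑ j ∈ Finset.Icc 1 na, aca / bca * Real.exp (-bca * (t - Aa j)))
        + (∑ i ∈ Finset.range (nc + 1), aac / bac * Real.exp (-bac * (t - Ac i)))
        + (∑ j ∈ Finset.Icc 1 na, aaa / baa * Real.exp (-baa * (t - Aa j)))) := by
    have i12 : IntegrableOn (fun s =>
        (∑ i ∈ Finset.range (nc + 1), acc * Real.exp (-bcc * (s - Ac i)))
          + (∑ j ∈ Finset.Icc 1 na, aca * Real.exp (-bca * (s - Aa j)))) (Set.Ioi t) := i1.add i2
    have i34 : IntegrableOn (fun s =>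
        (∑ i ∈ Finset.range (nc + 1), aac * Real.exp (-bac * (s - Ac i)))
          + (∑ j ∈ Finset.Icc 1 na, aaa * Real.exp (-baa * (s - Aa j)))) (Set.Ioi t) := i3.add i4
    rw [MeasureTheory.integral_add i12 i34, MeasureTheory.integral_add i1 i2,
        MeasureTheory.integral_add i3 i4, e1, e2, e3, e4]
    ring
  exact ⟨hint, heq, by rw [heq]⟩
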